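/- Let S ⊆ Y = P^{n_1} × ... × P^{n_k} be a circuit with #S = 4 and let A ⊆ S with #A = 2. Then the intersection ⟨ν(A)⟩ ∩ ⟨ν(S \ A)⟩ consists of exactly one point q, this point q does not lie in ν(S), and if moreover q does not lie in ν(Y), then the X-rank of q equals 2. -/

import Mathlib

open scoped LinearAlgebra.Projectivization
open Projectivization

/-- The multiprojective space `Y = P^{n 0} × ... × P^{n (k-1)}` over `K`,
where `P^m = P(K^{m+1})`. -/
abbrev MultiProj (K : Type*) [Field K] {k : ℕ} (n : Fin k → ℕ) :=
  ∀ i : Fin k, ℙ K (Fin (n i + 1) → K)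

/-- A vector representative of the Segre image `ν(x)` of a point `x ∈ Y`:
the tensor product of representatives of the coordinates. -/
noncomputable def segreVec {K : Type*} [Field K] {k : ℕ} {n : Fin k → ℕ}
    (x : MultiProj K n) : PiTensorProduct K (fun i : Fin k => Fin (n i + 1) → K) :=
  PiTensorProduct.tprod K (fun i => (x i).rep)

/-- `e(S) = #S − 1 − dim⟨ν(S)⟩`, computed as `#S` minus the rank of the linear span
of vector representatives of `ν(S)`. -/
noncomputable def eSet {K : Type*} [Field K] {k : ℕ} {n : Fin k → ℕ}
    (S : Set (MultiProj K n)) : ℕ :=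
  S.ncard - Module.finrank K ↥(Submodule.span K (segreVec '' S))

/-- `S ⊆ Y` is nondegenerate: `π i '' S` spans `P^{n i}` for every `i`. -/
def Nondeg {K : Type*} [Field K] {k : ℕ} {n : Fin k → ℕ}
    (S : Set (MultiProj K n)) : Prop :=
  ∀ i : Fin k, Submodule.span K ((fun x => (x i).rep) '' S) = ⊤

/-- For products of `P^1`'s: `S` is nondegenerate iff each projection has ≥ 2 points. -/
def NondegPts {K : Type*} [Field K] {k : ℕ} {n : Fin k → ℕ}
    (S : Set (MultiProj K n)) : Prop :=
  ∀ i : Fin k, ∃ p ∈ S, ∃ q ∈ S, p i ≠ q i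

/-- `S` is a circuit: linearly dependent, but every proper subset is linearly independent. -/
def IsCircuit {K : Type*} [Field K] {k : ℕ} {n : Fin k → ℕ}
    (S : Set (MultiProj K n)) : Prop :=
  0 < eSet S ∧ ∀ S' : Set (MultiProj K n), S' ⊂ S → eSet S' = 0

/-- `q ∈ P^r` equals `ν(s)` for the point `s ∈ Y`. -/
def IsSegreOf {K : Type*} [Field K] {k : ℕ} {n : Fin k → ℕ}
    (q : ℙ K (PiTensorProduct K (fun i : Fin k => Fin (n i + 1) → K)))
    (s : MultiProj K n) : Prop :=
  ∃ c : K, q.rep = c • segreVec s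

/-- `q ∈ P^r` lies on the Segre variety `ν(Y)`. -/
def InSegre {K : Type*} [Field K] {k : ℕ} {n : Fin k → ℕ}
    (q : ℙ K (PiTensorProduct K (fun i : Fin k => Fin (n i + 1) → K))) : Prop :=
  ∃ y : MultiProj K n, IsSegreOf q y

/-- `S` is minimal: there is no projective line `L ⊆ P^r` contained in the Segre variety
`ν(Y)` meeting `ν(S)` in at least two points. -/
def IsMinimal {K : Type*} [Field K] {k : ℕ} {n : Fin k → ℕ}
    (S : Set (MultiProj K n)) : Prop :=
  ¬ ∃ W : Submodule K (PiTensorProduct K (fun i : Fin k => Fin (n i + 1) → K)),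
      Module.finrank K ↥W = 2 ∧
      (∀ x : ℙ K (PiTensorProduct K (fun i : Fin k => Fin (n i + 1) → K)),
        x.rep ∈ W → InSegre x) ∧
      ∃ x₁ x₂ : ℙ K (PiTensorProduct K (fun i : Fin k => Fin (n i + 1) → K)),
        x₁ ≠ x₂ ∧ x₁.rep ∈ W ∧ x₂.rep ∈ W ∧
        (∃ s₁ ∈ S, IsSegreOf x₁ s₁) ∧ (∃ s₂ ∈ S, IsSegreOf x₂ s₂)

/-- The `X`-rank of a point `q ∈ P^r`: the minimal cardinality of a finite `A ⊆ Y`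
with `q ∈ ⟨ν(A)⟩`. -/
noncomputable def xRank {K : Type*} [Field K] {k : ℕ} {n : Fin k → ℕ}
    (q : ℙ K (PiTensorProduct K (fun i : Fin k => Fin (n i + 1) → K))) : ℕ :=
  sInf {m : ℕ | ∃ A : Set (MultiProj K n), A.Finite ∧ A.ncard = m ∧
    q.rep ∈ Submodule.span K (segreVec '' A)}


section Aux
variable {K V : Type*} [Field K] [AddCommGroup V] [Module K V]

lemma coeffs_of_triple_indep {v1 v2 v3 : V} (h : LinearIndependent K ![v1, v2, v3])
    {a b c : K} (hrel : a • v1 + b • v2 + c • v3 = 0) : a = 0 ∧ b = 0 ∧ c = 0 := by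
  have h' := linearIndependent_iff'.mp h Finset.univ ![a, b, c] (by
    simpa [Fin.sum_univ_three] using hrel)
  exact ⟨h' 0 (Finset.mem_univ _), h' 1 (Finset.mem_univ _), h' 2 (Finset.mem_univ _)⟩

lemma range_triple (v1 v2 v3 : V) :
    Set.range ![v1, v2, v3] = {v1, v2, v3} := by
  ext w
  constructor
  · rintro ⟨i, rfl⟩
    fin_cases i <;> simp
  · intro hw
    rcases hw with h | h | h
    · exact ⟨0, h.symm⟩
    · exact ⟨1, h.symm⟩
    · exact ⟨2, h.symm⟩

lemma indep_of_finrank_three {v1 v2 v3 : V}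
    (h : 3 ≤ Module.finrank K ↥(Submodule.span K ({v1, v2, v3} : Set V))) :
    LinearIndependent K ![v1, v2, v3] := by
  rw [linearIndependent_iff_card_eq_finrank_span]
  have hle : (Set.range ![v1, v2, v3]).finrank K ≤ 3 := by
    simpa using finrank_range_le_card ![v1, v2, v3]
  rw [Set.finrank, range_triple] at hle
  rw [Set.finrank, range_triple]
  simp only [Fintype.card_fin]
  omega

end Aux

set_option maxHeartbeats 2000000 in
theorem segre_circuit_card_four_intersection
    {K : Type*} [Field K] {k : ℕ} {n : Fin k → ℕ}
    (hk : 0 < k) (hn : ∀ i, 0 < n i)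
    (S : Set (MultiProj K n)) (hSfin : S.Finite) (hScard : S.ncard = 4)
    (hcirc : IsCircuit S)
    (A : Set (MultiProj K n)) (hAS : A ⊆ S) (hAcard : A.ncard = 2) :
    ∃ q : ℙ K (PiTensorProduct K (fun i : Fin k => Fin (n i + 1) → K)),
      ({x : ℙ K (PiTensorProduct K (fun i : Fin k => Fin (n i + 1) → K)) |
          x.rep ∈ Submodule.span K (segreVec '' A)} ∩
        {x : ℙ K (PiTensorProduct K (fun i : Fin k => Fin (n i + 1) → K)) |
          x.rep ∈ Submodule.span K (segreVec '' (S \ A))}) = {q} ∧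
      (¬ ∃ s ∈ S, IsSegreOf q s) ∧
      (¬ InSegre q → xRank q = 2) := by
  classical
  obtain ⟨a1, a2, ha12, rfl⟩ := Set.ncard_eq_two.mp hAcard
  have hBcard : (S \ {a1, a2}).ncard = 2 := by
    rw [Set.ncard_diff hAS (Set.toFinite _), hScard, hAcard]
  obtain ⟨b1, b2, hb12, hB⟩ := Set.ncard_eq_two.mp hBcard
  have ha1S : a1 ∈ S := hAS (by simp)
  have ha2S : a2 ∈ S := hAS (by simp)
  have hb1' : b1 ∈ S \ ({a1, a2} : Set _) := by rw [hB]; simp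
  have hb2' : b2 ∈ S \ ({a1, a2} : Set _) := by rw [hB]; simp
  have hb1S : b1 ∈ S := hb1'.1
  have hb2S : b2 ∈ S := hb2'.1
  have hb1a1 : b1 ≠ a1 := fun h => hb1'.2 (by simp [h])
  have hb1a2 : b1 ≠ a2 := fun h => hb1'.2 (by simp [h])
  have hb2a1 : b2 ≠ a1 := fun h => hb2'.2 (by simp [h])
  have hb2a2 : b2 ≠ a2 := fun h => hb2'.2 (by simp [h])
  set v1 := segreVec a1 with hv1
  set v2 := segreVec a2 with hv2
  set v3 := segreVec b1 with hv3
  set v4 := segreVec b2 with hv4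
  -- every triple of distinct points of S gives linearly independent Segre vectors
  have tri : ∀ x y z w : MultiProj K n, x ∈ S → y ∈ S → z ∈ S → w ∈ S →
      x ≠ y → x ≠ z → y ≠ z → w ≠ x → w ≠ y → w ≠ z →
      LinearIndependent K ![segreVec x, segreVec y, segreVec z] := by
    intro x y z w hx hy hz hw hxy hxz hyz hwx hwy hwz
    have hsub : ({x, y, z} : Set (MultiProj K n)) ⊂ S := by
      constructor
      · simp [Set.insert_subset_iff, hx, hy, hz]
      · intro hST
        have hw' : w ∈ ({x, y, z} : Set (MultiProj K n)) := hST hw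
        simp only [Set.mem_insert_iff, Set.mem_singleton_iff] at hw'
        rcases hw' with h | h | h
        exacts [hwx h, hwy h, hwz h]
    have h0 := hcirc.2 _ hsub
    unfold eSet at h0
    have hcard3 : ({x, y, z} : Set (MultiProj K n)).ncard = 3 := by
      rw [Set.ncard_insert_of_notMem (by simp [hxy, hxz]) (Set.toFinite _),
        Set.ncard_pair hyz]
    have himg : segreVec '' ({x, y, z} : Set (MultiProj K n))
        = {segreVec x, segreVec y, segreVec z} := by
      simp [Set.image_insert_eq]
    rw [hcard3, himg] at h0
    exact indep_of_finrank_three (Nat.le_of_sub_eq_zero h0)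
  have ind123 : LinearIndependent K ![v1, v2, v3] :=
    tri a1 a2 b1 b2 ha1S ha2S hb1S hb2S ha12 (Ne.symm hb1a1) (Ne.symm hb1a2)
      hb2a1 hb2a2 (Ne.symm hb12)
  have ind124 : LinearIndependent K ![v1, v2, v4] :=
    tri a1 a2 b2 b1 ha1S ha2S hb2S hb1S ha12 (Ne.symm hb2a1) (Ne.symm hb2a2)
      hb1a1 hb1a2 hb12
  have ind134 : LinearIndependent K ![v1, v3, v4] :=
    tri a1 b1 b2 a2 ha1S hb1S hb2S ha2S (Ne.symm hb1a1) (Ne.symm hb2a1) hb12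
      (Ne.symm ha12) hb1a2.symm hb2a2.symm
  have ind234 : LinearIndependent K ![v2, v3, v4] :=
    tri a2 b1 b2 a1 ha2S hb1S hb2S ha1S (Ne.symm hb1a2) (Ne.symm hb2a2) hb12
      ha12 hb1a1.symm hb2a1.symm
  -- the span of the image of S has dimension 3
  have h1 := hcirc.1
  unfold eSet at h1
  rw [hScard] at h1
  haveI : FiniteDimensional K ↥(Submodule.span K (segreVec '' S)) :=
    FiniteDimensional.span_of_finite K (hSfin.image _)
  have hfr123 : Module.finrank K ↥(Submodule.span K ({v1, v2, v3} : Set _)) = 3 := by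
    have h := finrank_span_eq_card ind123
    rwa [range_triple, Fintype.card_fin] at h
  have hle3 : Submodule.span K ({v1, v2, v3} : Set _) ≤ Submodule.span K (segreVec '' S) := by
    rw [show ({v1, v2, v3} : Set _) = segreVec '' {a1, a2, b1} from by
      simp [Set.image_insert_eq, hv1, hv2, hv3]]
    exact Submodule.span_mono (Set.image_mono
      (by simp [Set.insert_subset_iff, ha1S, ha2S, hb1S]))
  have hspaneq : Submodule.span K ({v1, v2, v3} : Set _)
      = Submodule.span K (segreVec '' S) :=
    Submodule.eq_of_le_of_finrank_le hle3 (by rw [hfr123]; omega)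
  have hv4mem : v4 ∈ Submodule.span K ({v1, v2, v3} : Set _) := by
    rw [hspaneq, hv4]
    exact Submodule.subset_span (Set.mem_image_of_mem _ hb2S)
  rw [← range_triple, Submodule.mem_span_range_iff_exists_fun K] at hv4mem
  obtain ⟨cf, hcf0⟩ := hv4mem
  rw [Fin.sum_univ_three] at hcf0
  simp only [Matrix.cons_val_zero, Matrix.cons_val_one, Matrix.head_cons,
    Matrix.cons_val_two, Matrix.tail_cons] at hcf0
  obtain ⟨c1, c2, c3, hcf⟩ : ∃ c1 c2 c3 : K, c1 • v1 + c2 • v2 + c3 • v3 = v4 :=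
    ⟨cf 0, cf 1, cf 2, hcf0⟩
  -- all the coefficients are nonzero
  have hc1 : c1 ≠ 0 := by
    intro h
    have hrel : c2 • v2 + c3 • v3 + (-1 : K) • v4 = 0 := by
      rw [← hcf, h]; module
    have := (coeffs_of_triple_indep ind234 hrel).2.2
    simp at this
  have hc2 : c2 ≠ 0 := by
    intro h
    have hrel : c1 • v1 + c3 • v3 + (-1 : K) • v4 = 0 := by
      rw [← hcf, h]; module
    have := (coeffs_of_triple_indep ind134 hrel).2.2
    simp at this
  have hc3 : c3 ≠ 0 := by
    intro h
    have hrel : c1 • v1 + c2 • v2 + (-1 : K) • v4 = 0 := by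
      rw [← hcf, h]; module
    have := (coeffs_of_triple_indep ind124 hrel).2.2
    simp at this
  have hq0ne : c1 • v1 + c2 • v2 ≠ 0 := by
    intro h
    have hrel : c1 • v1 + c2 • v2 + (0 : K) • v3 = 0 := by
      simp only [zero_smul, add_zero]; exact h
    exact hc1 (coeffs_of_triple_indep ind123 hrel).1
  -- the candidate intersection point
  obtain ⟨u, hu0, hu⟩ : ∃ u : K, u ≠ 0 ∧ u • (c1 • v1 + c2 • v2)
      = (Projectivization.mk K (c1 • v1 + c2 • v2) hq0ne).rep := by
    obtain ⟨u, hu⟩ := (Projectivization.mk_eq_mk_iff' K _ _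
        (Projectivization.rep_nonzero _) hq0ne).mp
      (Projectivization.mk_rep (Projectivization.mk K (c1 • v1 + c2 • v2) hq0ne))
    refine ⟨u, ?_, hu⟩
    intro h
    apply Projectivization.rep_nonzero (Projectivization.mk K (c1 • v1 + c2 • v2) hq0ne)
    rw [← hu, h, zero_smul]
  have himgA : segreVec '' ({a1, a2} : Set _) = {v1, v2} := by
    simp [Set.image_insert_eq, hv1, hv2]
  have himgB : segreVec '' (S \ {a1, a2}) = {v3, v4} := by
    rw [hB]; simp [Set.image_insert_eq, hv3, hv4]
  have hqA : (Projectivization.mk K (c1 • v1 + c2 • v2) hq0ne).rep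
      ∈ Submodule.span K (segreVec '' ({a1, a2} : Set _)) := by
    rw [himgA]
    exact Submodule.mem_span_pair.mpr ⟨u * c1, u * c2, by rw [← hu]; module⟩
  have hqB : (Projectivization.mk K (c1 • v1 + c2 • v2) hq0ne).rep
      ∈ Submodule.span K (segreVec '' (S \ {a1, a2})) := by
    rw [himgB]
    refine Submodule.mem_span_pair.mpr ⟨-(u * c3), u, ?_⟩
    rw [← hu, ← hcf]; module
  refine ⟨Projectivization.mk K (c1 • v1 + c2 • v2) hq0ne, ?_, ?_, ?_⟩
  · -- the intersection is exactly {q}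
    ext x
    simp only [Set.mem_inter_iff, Set.mem_setOf_eq, Set.mem_singleton_iff]
    constructor
    · rintro ⟨hx1, hx2⟩
      rw [himgA] at hx1
      rw [himgB] at hx2
      obtain ⟨α, β, hab⟩ := Submodule.mem_span_pair.mp hx1
      obtain ⟨γ, δ, hcd⟩ := Submodule.mem_span_pair.mp hx2
      have h3 : α • v1 + β • v2 = γ • v3 + δ • (c1 • v1 + c2 • v2 + c3 • v3) := by
        rw [hcf]; exact hab.trans hcd.symm
      have hrel : (α - δ * c1) • v1 + (β - δ * c2) • v2 + (-γ - δ * c3) • v3 = 0 := by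
        have key : (α - δ * c1) • v1 + (β - δ * c2) • v2 + (-γ - δ * c3) • v3
            = (α • v1 + β • v2) - (γ • v3 + δ • (c1 • v1 + c2 • v2 + c3 • v3)) := by
          module
        rw [key, h3, sub_self]
      obtain ⟨e1, e2, e3⟩ := coeffs_of_triple_indep ind123 hrel
      have hxrep : x.rep = δ • (c1 • v1 + c2 • v2) := by
        rw [← hab, sub_eq_zero.mp e1, sub_eq_zero.mp e2]; module
      rw [← Projectivization.mk_rep x]
      exact (Projectivization.mk_eq_mk_iff' K _ _ x.rep_nonzero hq0ne).mpr ⟨δ, hxrep.symm⟩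
    · rintro rfl
      exact ⟨hqA, hqB⟩
  · -- q is not in ν(S)
    rintro ⟨s, hsS, c, hcq⟩
    have hS4 : S = {a1, a2, b1, b2} := by
      rw [← Set.union_diff_cancel hAS, hB]
      ext w
      simp only [Set.mem_union, Set.mem_insert_iff, Set.mem_singleton_iff]
      tauto
    rw [hS4] at hsS
    simp only [Set.mem_insert_iff, Set.mem_singleton_iff] at hsS
    have hq' : u • (c1 • v1 + c2 • v2) = c • segreVec s := hu.trans hcq
    rcases hsS with rfl | rfl | rfl | rfl
    · have hrel : (u * c1 - c) • v1 + (u * c2) • v2 + (0 : K) • v3 = 0 := by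
        have key : (u * c1 - c) • v1 + (u * c2) • v2 + (0 : K) • v3
            = u • (c1 • v1 + c2 • v2) - c • v1 := by module
        rw [key, hq', sub_self]
      rcases mul_eq_zero.mp (coeffs_of_triple_indep ind123 hrel).2.1 with h | h
      exacts [hu0 h, hc2 h]
    · have hrel : (u * c1) • v1 + (u * c2 - c) • v2 + (0 : K) • v3 = 0 := by
        have key : (u * c1) • v1 + (u * c2 - c) • v2 + (0 : K) • v3
            = u • (c1 • v1 + c2 • v2) - c • v2 := by module
        rw [key, hq', sub_self]
      rcases mul_eq_zero.mp (coeffs_of_triple_indep ind123 hrel).1 with h | h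
      exacts [hu0 h, hc1 h]
    · have hrel : (u * c1) • v1 + (u * c2) • v2 + (-c) • v3 = 0 := by
        have key : (u * c1) • v1 + (u * c2) • v2 + (-c) • v3
            = u • (c1 • v1 + c2 • v2) - c • v3 := by module
        rw [key, hq', sub_self]
      rcases mul_eq_zero.mp (coeffs_of_triple_indep ind123 hrel).1 with h | h
      exacts [hu0 h, hc1 h]
    · rw [← hv4, ← hcf] at hq'
      have hrel : (u * c1 - c * c1) • v1 + (u * c2 - c * c2) • v2
          + (-(c * c3)) • v3 = 0 := by
        have key : (u * c1 - c * c1) • v1 + (u * c2 - c * c2) • v2 + (-(c * c3)) • v3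
            = u • (c1 • v1 + c2 • v2) - c • (c1 • v1 + c2 • v2 + c3 • v3) := by module
        rw [key, hq', sub_self]
      obtain ⟨e1, e2, e3⟩ := coeffs_of_triple_indep ind123 hrel
      have hc0 : c = 0 := by
        rcases mul_eq_zero.mp (neg_eq_zero.mp e3) with h | h
        · exact h
        · exact absurd h hc3
      rw [hc0, zero_mul, sub_zero] at e1
      rcases mul_eq_zero.mp e1 with h | h
      exacts [hu0 h, hc1 h]
  · -- X-rank is 2
    intro hns
    unfold xRank
    have h2mem : (2 : ℕ) ∈ {m : ℕ | ∃ A : Set (MultiProj K n), A.Finite ∧ A.ncard = m ∧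
        (Projectivization.mk K (c1 • v1 + c2 • v2) hq0ne).rep
          ∈ Submodule.span K (segreVec '' A)} :=
      ⟨{a1, a2}, Set.toFinite _, hAcard, hqA⟩
    apply le_antisymm
    · exact Nat.sInf_le h2mem
    · apply le_csInf ⟨2, h2mem⟩
      rintro m ⟨A', hfin, hcard, hmem⟩
      by_contra hlt
      push_neg at hlt
      interval_cases m
      · have hA0 : A' = ∅ := (Set.ncard_eq_zero hfin).mp hcard
        rw [hA0, Set.image_empty, Submodule.span_empty, Submodule.mem_bot] at hmem
        exact Projectivization.rep_nonzero _ hmem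
      · obtain ⟨y, rfl⟩ := Set.ncard_eq_one.mp hcard
        rw [Set.image_singleton] at hmem
        obtain ⟨c, hcq⟩ := Submodule.mem_span_singleton.mp hmem
        exact hns ⟨y, c, hcq.symm⟩
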